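/- Let {X_t : t ∈ ℤ} be a real-valued almost periodically correlated (APC) time series whose autocovariance function is uniformly summable: there exists a summable sequence {c_τ}_{τ=0}^∞ of real numbers such that |Cov(X_t, X_{t+τ})| ≤ c_τ for all t ∈ ℤ and τ ≥ 0. Then there exists a number σ² such that for every sequence b = b(n) ≤ n tending to infinity, sup_{s=1,…,n−b+1} | Var( b^{−1/2} Σ_{t=s}^{s+b−1} X_t ) − σ² | → 0 as n → ∞. -/

import Mathlib

open MeasureTheory Filter Topology

noncomputable section

variable {Ω : Type*} [MeasurableSpace Ω]

/-- An almost periodic sequence (Bohr/Bochner, discrete version): for every `ε > 0` there is a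
length `l` such that every set of `l` consecutive integers contains an `ε`-almost period. -/
def AlmostPeriodicSeq {E : Type*} [SeminormedAddCommGroup E] (f : ℤ → E) : Prop :=
  ∀ ε : ℝ, 0 < ε → ∃ l : ℕ, 0 < l ∧ ∀ a : ℤ, ∃ p : ℤ,
    a ≤ p ∧ p < a + l ∧ ∀ t : ℤ, ‖f (t + p) - f t‖ < ε

/-- Almost periodically correlated (APC) time series: square integrable, with almost periodic
mean function and almost periodic second-order moment functions. -/
def APC (P : Measure Ω) (X : ℤ → Ω → ℝ) : Prop :=
  (∀ t : ℤ, Integrable (fun ω => (X t ω) ^ 2) P) ∧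
  AlmostPeriodicSeq (fun t => ∫ ω, X t ω ∂P) ∧
  ∀ τ : ℤ, AlmostPeriodicSeq (fun t => ∫ ω, X t ω * X (t + τ) ω ∂P)

/-- Covariance of two real random variables. -/
def cov (P : Measure Ω) (f g : Ω → ℝ) : ℝ :=
  (∫ ω, f ω * g ω ∂P) - (∫ ω, f ω ∂P) * (∫ ω, g ω ∂P)

noncomputable def avg (f : ℤ → ℝ) (s : ℤ) (n : ℕ) : ℝ :=
  (n:ℝ)⁻¹ * ∑ j ∈ Finset.range n, f (s + j)

lemma AlmostPeriodicSeq.bounded {f : ℤ → ℝ} (hf : AlmostPeriodicSeq f) :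
    ∃ M : ℝ, 0 ≤ M ∧ ∀ t : ℤ, |f t| ≤ M := by
  obtain ⟨l, hl, hap⟩ := hf 1 one_pos
  have hne : (Finset.range l).Nonempty := Finset.nonempty_range_iff.2 hl.ne'
  set M0 := (Finset.range l).sup' hne (fun j : ℕ => |f j|) with hM0
  refine ⟨M0 + 1, ?_, ?_⟩
  · have := Finset.le_sup' (fun j : ℕ => |f j|) (Finset.mem_range.2 hl)
    have h0 : (0:ℝ) ≤ |f (0:ℕ)| := abs_nonneg _
    nlinarith [h0.trans this]
  · intro t
    obtain ⟨p, hp1, hp2, hp3⟩ := hap (t - l + 1)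
    have h := hp3 (t - p)
    have hk : 0 ≤ t - p ∧ t - p < l := by constructor <;> omega
    have : |f t - f (t - p)| < 1 := by simpa [sub_add_cancel] using h
    have hmem : (t - p).toNat ∈ Finset.range l := by
      rw [Finset.mem_range]; omega
    have hle : |f (t-p)| ≤ M0 := by
      have h2 := Finset.le_sup' (fun j : ℕ => |f j|) hmem
      rwa [show (((t - p).toNat : ℕ) : ℤ) = t - p from Int.toNat_of_nonneg hk.1] at h2
    have := abs_sub_abs_le_abs_sub (f t) (f (t - p))
    linarith

lemma abs_sum_le_card_mul {g : ℕ → ℝ} {M : ℝ} (hM : ∀ j, |g j| ≤ M) (s : Finset ℕ) :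
    |∑ j ∈ s, g j| ≤ s.card * M := by
  calc |∑ j ∈ s, g j| ≤ ∑ j ∈ s, |g j| := Finset.abs_sum_le_sum_abs _ _
    _ ≤ ∑ j ∈ s, M := Finset.sum_le_sum (fun j _ => hM j)
    _ = s.card * M := by simp [mul_comm]

lemma avg_abs_le {f : ℤ → ℝ} {M : ℝ} (hM0 : 0 ≤ M) (hM : ∀ t, |f t| ≤ M) (s : ℤ) (n : ℕ) :
    |avg f s n| ≤ M := by
  rcases Nat.eq_zero_or_pos n with h | h
  · simp [avg, h, hM0]
  · have hn : (0:ℝ) < n := by exact_mod_cast h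
    have hb : |∑ j ∈ Finset.range n, f (s + j)| ≤ (Finset.range n).card * M :=
      abs_sum_le_card_mul (fun j => hM _) _
    rw [Finset.card_range] at hb
    rw [avg, abs_mul, abs_inv, Nat.abs_cast]
    calc (n:ℝ)⁻¹ * |∑ j ∈ Finset.range n, f (s + j)| ≤ (n:ℝ)⁻¹ * (n * M) := by
          exact mul_le_mul_of_nonneg_left hb (by positivity)
      _ = M := by field_simp

lemma avg_shift_diff {f : ℤ → ℝ} {M : ℝ} (hM0 : 0 ≤ M) (hM : ∀ t, |f t| ≤ M)
    {ε : ℝ} {l : ℕ} (hl : 0 < l)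
    (hap : ∀ a : ℤ, ∃ p : ℤ, a ≤ p ∧ p < a + l ∧ ∀ t : ℤ, |f (t + p) - f t| < ε)
    (s s' : ℤ) (n : ℕ) (hn : 0 < n) :
    |avg f s n - avg f s' n| ≤ ε + 2 * l * M / n := by
  have hnR : (0:ℝ) < n := by exact_mod_cast hn
  obtain ⟨p, hp1, hp2, hp3⟩ := hap (s' - s)
  set d : ℕ := (p - (s' - s)).toNat with hd
  have hdl : d < l := by omega
  have hsp : s + p = s' + (d:ℤ) := by omega
  have hε0 : 0 ≤ ε := le_of_lt (lt_of_le_of_lt (abs_nonneg _) (hp3 0))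
  -- part 1
  have h1 : |avg f s n - avg f (s + p) n| ≤ ε := by
    have : avg f s n - avg f (s + p) n
        = (n:ℝ)⁻¹ * ∑ j ∈ Finset.range n, (f (s + j) - f ((s + j) + p)) := by
      rw [avg, avg, ← mul_sub, ← Finset.sum_sub_distrib]
      congr 1
      apply Finset.sum_congr rfl
      intro j _
      have hj : s + p + (j:ℤ) = s + j + p := by ring
      rw [hj]
    rw [this, abs_mul, abs_inv, Nat.abs_cast]
    have hb : |∑ j ∈ Finset.range n, (f (s + j) - f ((s + j) + p))|
        ≤ (Finset.range n).card * ε := by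
      refine abs_sum_le_card_mul (fun j => ?_) _
      rw [abs_sub_comm]; exact le_of_lt (hp3 _)
    rw [Finset.card_range] at hb
    calc (n:ℝ)⁻¹ * |∑ j ∈ Finset.range n, (f (s + j) - f ((s + j) + p))|
        ≤ (n:ℝ)⁻¹ * (n * ε) := mul_le_mul_of_nonneg_left hb (by positivity)
      _ = ε := by field_simp
  -- part 2
  have h2 : |avg f (s' + (d:ℤ)) n - avg f s' n| ≤ 2 * l * M / n := by
    set g : ℕ → ℝ := fun j => f (s' + j) with hg
    have e1 : avg f (s' + (d:ℤ)) n = (n:ℝ)⁻¹ * ∑ j ∈ Finset.range n, g (d + j) := by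
      rw [avg]; congr 1; apply Finset.sum_congr rfl; intro j _
      simp only [hg]; congr 1; push_cast; ring
    have e2 : avg f s' n = (n:ℝ)⁻¹ * ∑ j ∈ Finset.range n, g j := by rfl
    rcases le_or_gt n d with hcase | hcase
    · have hln : n < l := lt_of_le_of_lt hcase hdl
      have := abs_sub (avg f (s' + (d:ℤ)) n) (avg f s' n)
      have hA := avg_abs_le hM0 hM (s' + (d:ℤ)) n
      have hB := avg_abs_le hM0 hM s' n
      have hlM : 2 * M ≤ 2 * l * M / n := by
        rw [le_div_iff₀ hnR]
        have : (n:ℝ) ≤ (l:ℝ) := by exact_mod_cast hln.le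
        nlinarith
      calc |avg f (s' + (d:ℤ)) n - avg f s' n| ≤ |avg f (s' + (d:ℤ)) n| + |avg f s' n| :=
            abs_sub _ _
        _ ≤ 2 * M := by linarith
        _ ≤ 2 * l * M / n := hlM
    · have hgM : ∀ j, |g j| ≤ M := fun j => hM _
      have key : ∑ j ∈ Finset.range n, g (d + j) - ∑ j ∈ Finset.range n, g j
          = ∑ j ∈ Finset.Ico n (d + n), g j - ∑ j ∈ Finset.Ico 0 d, g j := by
        have r1 : ∑ j ∈ Finset.range n, g (d + j) = ∑ j ∈ Finset.Ico d (d + n), g j := by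
          rw [Finset.sum_Ico_eq_sum_range]; simp
        have r2 : ∑ j ∈ Finset.range n, g j = ∑ j ∈ Finset.Ico 0 n, g j := by
          rw [Finset.range_eq_Ico]
        have c1 : ∑ j ∈ Finset.Ico d n, g j + ∑ j ∈ Finset.Ico n (d + n), g j
            = ∑ j ∈ Finset.Ico d (d + n), g j :=
          Finset.sum_Ico_consecutive _ (by omega) (by omega)
        have c2 : ∑ j ∈ Finset.Ico 0 d, g j + ∑ j ∈ Finset.Ico d n, g j
            = ∑ j ∈ Finset.Ico 0 n, g j :=
          Finset.sum_Ico_consecutive _ (by omega) (by omega)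
        rw [r1, r2, ← c1, ← c2]; ring
      have b1 : |∑ j ∈ Finset.Ico n (d + n), g j| ≤ d * M := by
        have := abs_sum_le_card_mul hgM (Finset.Ico n (d + n))
        rwa [Nat.card_Ico, show d + n - n = d by omega] at this
      have b2 : |∑ j ∈ Finset.Ico 0 d, g j| ≤ d * M := by
        have := abs_sum_le_card_mul hgM (Finset.Ico 0 d)
        rwa [Nat.card_Ico, show d - 0 = d by omega] at this
      have hdlM : (d:ℝ) * M ≤ l * M := by
        apply mul_le_mul_of_nonneg_right _ hM0; exact_mod_cast hdl.le
      rw [e1, e2, ← mul_sub, abs_mul, abs_inv, Nat.abs_cast, key]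
      calc (n:ℝ)⁻¹ * |∑ j ∈ Finset.Ico n (d + n), g j - ∑ j ∈ Finset.Ico 0 d, g j|
          ≤ (n:ℝ)⁻¹ * (2 * l * M) := by
            apply mul_le_mul_of_nonneg_left _ (by positivity)
            have := abs_sub (∑ j ∈ Finset.Ico n (d + n), g j) (∑ j ∈ Finset.Ico 0 d, g j)
            linarith
        _ = 2 * l * M / n := by field_simp
  calc |avg f s n - avg f s' n|
      ≤ |avg f s n - avg f (s + p) n| + |avg f (s + p) n - avg f s' n| := abs_sub_le _ _ _
    _ ≤ ε + 2 * l * M / n := by rw [hsp] at *; exact add_le_add h1 h2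

lemma sum_range_mul_decomp (f : ℤ → ℝ) (s : ℤ) (n m : ℕ) :
    ∑ j ∈ Finset.range (n * m), f (s + j)
      = ∑ k ∈ Finset.range m, ∑ i ∈ Finset.range n, f (s + (k * n + i : ℕ)) := by
  induction m with
  | zero => simp
  | succ m ih =>
    rw [Finset.sum_range_succ, ← ih, Nat.mul_succ]
    have : ∑ j ∈ Finset.range (n * m + n), f (s + j)
        = ∑ j ∈ Finset.range (n * m), f (s + j)
          + ∑ j ∈ Finset.Ico (n * m) (n * m + n), f (s + j) := by
      rw [Finset.range_eq_Ico, Finset.range_eq_Ico]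
      exact (Finset.sum_Ico_consecutive (fun j : ℕ => f (s + j)) (Nat.zero_le _) (Nat.le_add_right _ _)).symm
    rw [this, Finset.sum_Ico_eq_sum_range]
    simp [Nat.add_sub_cancel_left, mul_comm]

lemma avg_mul_decomp (f : ℤ → ℝ) (s : ℤ) (n m : ℕ) (hn : 0 < n) (hm : 0 < m) :
    avg f s (n * m) = (m:ℝ)⁻¹ * ∑ k ∈ Finset.range m, avg f (s + (k * n : ℕ)) n := by
  rw [avg, sum_range_mul_decomp]
  rw [Finset.mul_sum, Finset.mul_sum]
  apply Finset.sum_congr rfl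
  intro k _
  rw [avg, ← mul_assoc, Finset.mul_sum, Finset.mul_sum]
  refine Finset.sum_congr rfl (fun i _ => ?_)
  have harg : s + ((k * n + i : ℕ) : ℤ) = s + ((k * n : ℕ) : ℤ) + (i : ℤ) := by push_cast; ring
  rw [harg]
  have hnm : ((n*m : ℕ):ℝ) = (n:ℝ) * m := by push_cast; ring
  rw [hnm, mul_inv]
  ring

lemma uniform_mean {f : ℤ → ℝ} (hf : AlmostPeriodicSeq f) :
    ∃ L : ℝ, ∀ ε : ℝ, 0 < ε → ∃ N : ℕ, 0 < N ∧ ∀ n, N ≤ n → ∀ s, |avg f s n - L| ≤ ε := by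
  obtain ⟨M, hM0, hM⟩ := hf.bounded
  have key : ∀ ε : ℝ, 0 < ε → ∃ N : ℕ, 0 < N ∧
      ∀ n n' : ℕ, N ≤ n → N ≤ n' → ∀ s s' : ℤ, |avg f s n - avg f s' n'| ≤ ε := by
    intro ε hε
    have hε6 : 0 < ε / 6 := by linarith
    obtain ⟨l, hl, hap⟩ := hf (ε / 6) hε6
    obtain ⟨N0, hN0⟩ := exists_nat_ge (2 * l * M / (ε / 6))
    set N := max N0 1 with hN
    have hN1 : 0 < N := by omega
    have hNbig : ∀ n : ℕ, N ≤ n → 2 * l * M / n ≤ ε / 6 := by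
      intro n hn
      have hnpos : (0:ℝ) < n := by exact_mod_cast lt_of_lt_of_le hN1 hn
      have h1 : 2 * l * M / (ε/6) ≤ (n:ℝ) := le_trans hN0 (by exact_mod_cast le_trans (le_max_left _ _) hn)
      rw [div_le_iff₀ hε6] at h1
      rw [div_le_iff₀ hnpos]
      linarith
    refine ⟨N, hN1, ?_⟩
    intro n n' hn hn' s s'
    have hnpos : 0 < n := lt_of_lt_of_le hN1 hn
    have hn'pos : 0 < n' := lt_of_lt_of_le hN1 hn'
    have hdec : ∀ (s : ℤ) (ν m : ℕ), 0 < ν → 0 < m →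
        |avg f s ν - avg f s (ν * m)| ≤ ε/6 + 2 * l * M / ν := by
      intro s ν m hnpos hm
      rw [avg_mul_decomp f s ν m hnpos hm]
      have : avg f s ν = (m:ℝ)⁻¹ * ∑ k ∈ Finset.range m, avg f s ν := by
        rw [Finset.sum_const, Finset.card_range, nsmul_eq_mul]
        field_simp
      rw [this, ← mul_sub, ← Finset.sum_sub_distrib, abs_mul, abs_inv, Nat.abs_cast]
      have hb : |∑ k ∈ Finset.range m, (avg f s ν - avg f (s + (k * ν : ℕ)) ν)|
          ≤ (Finset.range m).card * (ε/6 + 2 * l * M / ν) := by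
        refine abs_sum_le_card_mul (fun k => ?_) _
        exact avg_shift_diff hM0 hM hl hap s _ ν hnpos
      rw [Finset.card_range] at hb
      have hmpos : (0:ℝ) < m := by exact_mod_cast hm
      calc ((m:ℝ))⁻¹ * |∑ k ∈ Finset.range m, (avg f s ν - avg f (s + (k * ν : ℕ)) ν)|
          ≤ (m:ℝ)⁻¹ * (m * (ε/6 + 2 * l * M / ν)) :=
            mul_le_mul_of_nonneg_left hb (by positivity)
        _ = ε/6 + 2 * l * M / ν := by field_simp
    have h1 : |avg f s n - avg f s (n * n')| ≤ ε/6 + ε/6 := by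
      have := hdec s n n' hnpos hn'pos
      have := hNbig n hn
      linarith
    have h3 : |avg f s' n' - avg f s' (n * n')| ≤ ε/6 + ε/6 := by
      have h := hdec s' n' n hn'pos hnpos
      have h2 := hNbig n' hn'
      rw [Nat.mul_comm n' n] at h
      linarith
    have h2 : |avg f s (n * n') - avg f s' (n * n')| ≤ ε/6 + ε/6 := by
      have hnn' : 0 < n * n' := Nat.mul_pos hnpos hn'pos
      have := avg_shift_diff hM0 hM hl hap s s' (n * n') hnn'
      have hb : 2 * l * M / ((n:ℝ) * n') ≤ 2 * l * M / n := by
        have h1 : (1:ℝ) ≤ (n':ℝ) := by exact_mod_cast hn'pos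
        have h2' : (0:ℝ) < (n:ℝ) := by exact_mod_cast hnpos
        have hl0 : (0:ℝ) ≤ 2 * l * M := by positivity
        rw [div_le_div_iff₀ (by positivity) h2']
        nlinarith [mul_nonneg (mul_nonneg hl0 h2'.le) (sub_nonneg.2 h1)]
      have hc := hNbig n hn
      have : |avg f s (n*n') - avg f s' (n*n')| ≤ ε/6 + 2*l*M/((n:ℝ)*n') := by
        convert this using 3
        push_cast; ring
      linarith
    calc |avg f s n - avg f s' n'|
        ≤ |avg f s n - avg f s (n * n')| + |avg f s (n * n') - avg f s' n'| := abs_sub_le _ _ _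
      _ ≤ |avg f s n - avg f s (n * n')| + (|avg f s (n * n') - avg f s' (n * n')|
            + |avg f s' (n * n') - avg f s' n'|) := by
          have := abs_sub_le (avg f s (n * n')) (avg f s' (n * n')) (avg f s' n')
          linarith
      _ ≤ ε := by rw [abs_sub_comm] at h3; linarith
  have hcauchy : CauchySeq (fun n => avg f 0 n) := by
    rw [Metric.cauchySeq_iff]
    intro ε hε
    obtain ⟨N, hN1, hN⟩ := key (ε/2) (by linarith)
    exact ⟨N, fun m hm n hn => by
      rw [Real.dist_eq]; exact lt_of_le_of_lt (hN m n hm hn 0 0) (by linarith)⟩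
  obtain ⟨L, hL⟩ := cauchySeq_tendsto_of_complete hcauchy
  refine ⟨L, ?_⟩
  intro ε hε
  obtain ⟨N, hN1, hN⟩ := key (ε/2) (by linarith)
  refine ⟨N, hN1, ?_⟩
  intro n hn s
  have htd : Tendsto (fun n' => |avg f s n - avg f 0 n'|) atTop (𝓝 |avg f s n - L|) :=
    (tendsto_const_nhds.sub hL).abs
  have hev : ∀ᶠ n' in atTop, |avg f s n - avg f 0 n'| ≤ ε/2 := by
    filter_upwards [eventually_ge_atTop N] with n' hn'
    exact hN n n' hn hn' s 0
  have := le_of_tendsto htd hev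
  linarith

lemma AlmostPeriodicSeq.mul_shift {f : ℤ → ℝ} (hf : AlmostPeriodicSeq f) (τ : ℤ) :
    AlmostPeriodicSeq (fun t => f t * f (t + τ)) := by
  obtain ⟨M, hM0, hM⟩ := hf.bounded
  intro ε hε
  have hδ : 0 < ε / (2 * M + 1) := by positivity
  obtain ⟨l, hl, hap⟩ := hf (ε / (2 * M + 1)) hδ
  refine ⟨l, hl, fun a => ?_⟩
  obtain ⟨p, h1, h2, h3⟩ := hap a
  refine ⟨p, h1, h2, fun t => ?_⟩
  simp only [Real.norm_eq_abs] at h3 ⊢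
  have e : f (t + p) * f (t + p + τ) - f t * f (t + τ)
      = f (t + p) * (f ((t + τ) + p) - f (t + τ)) + f (t + τ) * (f (t + p) - f t) := by
    have : t + p + τ = (t + τ) + p := by ring
    rw [this]; ring
  rw [e]
  have b1 := h3 (t + τ)
  have b2 := h3 t
  have hMε : M * (ε / (2 * M + 1)) + M * (ε / (2 * M + 1)) < ε := by
    rw [div_eq_inv_mul]
    have h2M : 0 < 2 * M + 1 := by linarith
    rw [show M * ((2*M+1)⁻¹ * ε) + M * ((2*M+1)⁻¹ * ε) = (2*M) * ((2*M+1)⁻¹ * ε) by ring]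
    calc (2*M) * ((2*M+1)⁻¹ * ε) < (2*M+1) * ((2*M+1)⁻¹ * ε) := by
          apply mul_lt_mul_of_pos_right (by linarith) (by positivity)
      _ = ε := by field_simp
  calc |f (t + p) * (f ((t + τ) + p) - f (t + τ)) + f (t + τ) * (f (t + p) - f t)|
      ≤ |f (t + p)| * |f ((t + τ) + p) - f (t + τ)| + |f (t + τ)| * |f (t + p) - f t| := by
        have := abs_add_le (f (t + p) * (f ((t + τ) + p) - f (t + τ))) (f (t + τ) * (f (t + p) - f t))
        rw [abs_mul, abs_mul] at this
        exact this
    _ ≤ M * (ε / (2 * M + 1)) + M * (ε / (2 * M + 1)) := by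
        apply add_le_add
        · exact mul_le_mul (hM _) b1.le (abs_nonneg _) hM0
        · exact mul_le_mul (hM _) b2.le (abs_nonneg _) hM0
    _ < ε := hMε

lemma avg_sub (f g : ℤ → ℝ) (s : ℤ) (n : ℕ) :
    avg (fun t => f t - g t) s n = avg f s n - avg g s n := by
  simp only [avg, ← mul_sub, ← Finset.sum_sub_distrib]

lemma uniform_mean_sub {f g : ℤ → ℝ} (hf : AlmostPeriodicSeq f) (hg : AlmostPeriodicSeq g) :
    ∃ L : ℝ, ∀ ε : ℝ, 0 < ε → ∃ N : ℕ, 0 < N ∧ ∀ n, N ≤ n → ∀ s,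
      |avg (fun t => f t - g t) s n - L| ≤ ε := by
  obtain ⟨Lf, hLf⟩ := uniform_mean hf
  obtain ⟨Lg, hLg⟩ := uniform_mean hg
  refine ⟨Lf - Lg, fun ε hε => ?_⟩
  obtain ⟨Nf, hNf1, hNf⟩ := hLf (ε/2) (by linarith)
  obtain ⟨Ng, hNg1, hNg⟩ := hLg (ε/2) (by linarith)
  refine ⟨max Nf Ng, by omega, fun n hn s => ?_⟩
  rw [avg_sub]
  have h1 := hNf n (le_trans (le_max_left _ _) hn) s
  have h2 := hNg n (le_trans (le_max_right _ _) hn) s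
  calc |avg f s n - avg g s n - (Lf - Lg)|
      = |(avg f s n - Lf) - (avg g s n - Lg)| := by ring_nf
    _ ≤ |avg f s n - Lf| + |avg g s n - Lg| := abs_sub _ _
    _ ≤ ε := by linarith

set_option maxHeartbeats 2000000 in
lemma final_est (φ : ℕ → ℤ → ℝ) (g : ℕ → ℝ) (c : ℕ → ℝ) (hc : Summable c)
    (hφb : ∀ τ t, |φ τ t| ≤ c τ) (hgb : ∀ τ, |g τ| ≤ c τ)
    (hmean : ∀ τ, ∀ ε : ℝ, 0 < ε → ∃ N : ℕ, 0 < N ∧ ∀ n, N ≤ n → ∀ s,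
      |avg (φ τ) s n - g τ| ≤ ε) :
    ∀ ε : ℝ, 0 < ε → ∃ B : ℕ, ∀ b, B ≤ b → ∀ s : ℤ,
      |(avg (φ 0) s b
          + 2 * (b:ℝ)⁻¹ * ∑ τ ∈ Finset.Icc 1 (b-1), ∑ i ∈ Finset.range (b - τ), φ τ (s + i))
        - (g 0 + 2 * ∑' τ : ℕ, g (τ + 1))| ≤ ε := by
  have hc0 : ∀ τ, 0 ≤ c τ := fun τ => le_trans (abs_nonneg _) (hφb τ 0)
  have hgabs : Summable (fun τ => |g τ|) := Summable.of_nonneg_of_le (fun _ => abs_nonneg _) hgb hc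
  have hgsum : Summable g := hgabs.of_abs
  intro ε hε
  set ε' := ε / 11 with hε'def
  have hε' : 0 < ε' := by positivity
  -- tail control
  have htail : Tendsto (fun i => ∑' k, c (k + i)) atTop (𝓝 0) := tendsto_sum_nat_add c
  obtain ⟨T0, hT0⟩ := eventually_atTop.1 ((tendsto_order.1 htail).2 ε' hε')
  set T := T0 with hTdef
  -- uniform means with accuracy ε'/(T+1)
  have hδ : 0 < ε' / (T + 1) := by positivity
  have H : ∀ τ : ℕ, ∃ N : ℕ, 0 < N ∧ ∀ n, N ≤ n → ∀ s, |avg (φ τ) s n - g τ| ≤ ε' / (T + 1) :=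
    fun τ => hmean τ _ hδ
  choose N hN1 hN2 using H
  set Nstar := (Finset.Icc 1 T).sup N with hNstar
  obtain ⟨N0, hN01, hN0⟩ := hmean 0 ε' hε'
  set C0 := ∑ τ ∈ Finset.Icc 1 T, c τ with hC0
  have hC0nn : 0 ≤ C0 := Finset.sum_nonneg (fun τ _ => hc0 τ)
  obtain ⟨B1, hB1⟩ := exists_nat_ge ((T : ℝ) * C0 / ε')
  set B := max (max (T + Nstar + 2) N0) (max B1 (T0 + 1)) with hB
  refine ⟨B, fun b hb s => ?_⟩
  have hbT : T + Nstar + 2 ≤ b := le_trans (le_trans (le_max_left _ _) (le_max_left _ _)) hb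
  have hbN0 : N0 ≤ b := le_trans (le_trans (le_max_right _ _) (le_max_left _ _)) hb
  have hbB1 : B1 ≤ b := le_trans (le_trans (le_max_left _ _) (le_max_right _ _)) hb
  have hbT0 : T0 + 1 ≤ b := le_trans (le_trans (le_max_right _ _) (le_max_right _ _)) hb
  have hb1 : 1 ≤ b := by omega
  have hbR : (0:ℝ) < b := by exact_mod_cast (by omega : 0 < b)
  -- tsum split
  have hsumg1 : Summable (fun τ : ℕ => g (τ + 1)) := (summable_nat_add_iff 1).2 hgsum
  have hsplit : ∑' τ : ℕ, g (τ + 1)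
      = ∑ τ ∈ Finset.Icc 1 (b - 1), g τ + ∑' k, g (k + b) := by
    have h1 := (Summable.sum_add_tsum_nat_add (f := fun τ : ℕ => g (τ + 1)) (b - 1) hsumg1).symm
    rw [h1]
    congr 1
    · rw [show Finset.Icc 1 (b-1) = Finset.Ico 1 b from by
        rw [← Finset.Ico_add_one_right_eq_Icc]; congr 1; omega]
      rw [Finset.sum_Ico_eq_sum_range]
      exact (Finset.sum_congr (by congr 1) (fun i _ => by rw [add_comm])).symm
    · exact tsum_congr (fun k => by congr 1; omega)
  -- the per-τ block sums
  set S : ℕ → ℝ := fun τ => ∑ i ∈ Finset.range (b - τ), φ τ (s + i) with hS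
  -- decompose the difference
  have hdecomp : (avg (φ 0) s b + 2 * (b:ℝ)⁻¹ * ∑ τ ∈ Finset.Icc 1 (b-1), S τ)
        - (g 0 + 2 * ∑' τ : ℕ, g (τ + 1))
      = (avg (φ 0) s b - g 0)
        + 2 * (∑ τ ∈ Finset.Icc 1 (b-1), ((b:ℝ)⁻¹ * S τ - g τ))
        - 2 * ∑' k, g (k + b) := by
    have e : ∑ τ ∈ Finset.Icc 1 (b-1), ((b:ℝ)⁻¹ * S τ - g τ)
        = (b:ℝ)⁻¹ * ∑ τ ∈ Finset.Icc 1 (b-1), S τ - ∑ τ ∈ Finset.Icc 1 (b-1), g τ := by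
      rw [Finset.sum_sub_distrib, Finset.mul_sum]
    rw [hsplit, e]
    ring
  -- bounds on individual terms
  have hterm1 : |avg (φ 0) s b - g 0| ≤ ε' := hN0 b hbN0 s
  have htail_b : ∑' k, c (k + b) ≤ ε' := (hT0 b (by omega)).le
  have htail_T : ∑' k, c (k + (T + 1)) ≤ ε' := (hT0 (T + 1) (by omega)).le
  have hterm3 : |∑' k, g (k + b)| ≤ ε' := by
    have s1 : Summable (fun k => g (k + b)) := (summable_nat_add_iff b).2 hgsum
    have s2 : Summable (fun k => |g (k + b)|) := (summable_nat_add_iff b).2 hgabs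
    have s3 : Summable (fun k => c (k + b)) := (summable_nat_add_iff b).2 hc
    calc |∑' k, g (k + b)| ≤ ∑' k, |g (k + b)| := by
          simpa [Real.norm_eq_abs] using norm_tsum_le_tsum_norm (f := fun k => g (k + b))
            (by simpa [Real.norm_eq_abs] using s2)
      _ ≤ ∑' k, c (k + b) := Summable.tsum_le_tsum (fun k => hgb _) s2 s3
      _ ≤ ε' := htail_b
  -- middle sum split
  have hmid : ∑ τ ∈ Finset.Icc 1 (b-1), |(b:ℝ)⁻¹ * S τ - g τ| ≤ 2 * ε' + 2 * ε' := by
    have hIcc : Finset.Icc 1 (b-1) = Finset.Ico 1 b := by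
      rw [← Finset.Ico_add_one_right_eq_Icc]; congr 1; omega
    rw [hIcc, ← Finset.sum_Ico_consecutive (fun τ => |(b:ℝ)⁻¹ * S τ - g τ|)
      (by omega : 1 ≤ T + 1) (by omega : T + 1 ≤ b)]
    have hpart1 : ∑ τ ∈ Finset.Ico 1 (T+1), |(b:ℝ)⁻¹ * S τ - g τ| ≤ 2 * ε' := by
      have hper : ∀ τ ∈ Finset.Ico 1 (T+1),
          |(b:ℝ)⁻¹ * S τ - g τ| ≤ ε' / (T + 1) + (T:ℝ) / b * c τ := by
        intro τ hτ
        rw [Finset.mem_Ico] at hτ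
        have hτT : τ ≤ T := by omega
        have hbτ : 0 < b - τ := by omega
        have hNτ : N τ ≤ b - τ := by
          have : N τ ≤ Nstar := Finset.le_sup (Finset.mem_Icc.2 ⟨hτ.1, hτT⟩)
          omega
        set n := b - τ with hn
        have hAg : |avg (φ τ) s n - g τ| ≤ ε' / (T + 1) := hN2 τ n hNτ s
        have hAb : |avg (φ τ) s n| ≤ c τ := avg_abs_le (hc0 τ) (hφb τ) s n
        have hbn : ((n:ℕ):ℝ) = (b:ℝ) - τ := by
          rw [hn, Nat.cast_sub (by omega : τ ≤ b)]
        have hSn : S τ = (n:ℝ) * avg (φ τ) s n := by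
          rw [avg]
          have hnR : ((n:ℕ):ℝ) ≠ 0 := by
            have : 0 < n := hbτ
            positivity
          field_simp [hS]
          rfl
        have key : (b:ℝ)⁻¹ * S τ - g τ
            = (avg (φ τ) s n - g τ) - (τ:ℝ)/b * avg (φ τ) s n := by
          rw [hSn, hbn]
          field_simp
          ring
        rw [key]
        have h2 : |(τ:ℝ)/b * avg (φ τ) s n| ≤ (T:ℝ)/b * c τ := by
          rw [abs_mul, abs_div, abs_of_nonneg (by positivity : (0:ℝ) ≤ (τ:ℝ)), abs_of_pos hbR]
          apply mul_le_mul _ hAb (abs_nonneg _) (by positivity)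
          exact div_le_div₀ (by positivity) (by exact_mod_cast hτT) hbR le_rfl
        calc |(avg (φ τ) s n - g τ) - (τ:ℝ)/b * avg (φ τ) s n|
            ≤ |avg (φ τ) s n - g τ| + |(τ:ℝ)/b * avg (φ τ) s n| := abs_sub _ _
          _ ≤ ε' / (T + 1) + (T:ℝ)/b * c τ := add_le_add hAg h2
      calc ∑ τ ∈ Finset.Ico 1 (T+1), |(b:ℝ)⁻¹ * S τ - g τ|
          ≤ ∑ τ ∈ Finset.Ico 1 (T+1), (ε' / (T + 1) + (T:ℝ) / b * c τ) :=
            Finset.sum_le_sum hper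
        _ = (Finset.Ico 1 (T+1)).card * (ε' / (T+1)) + (T:ℝ)/b * C0 := by
            rw [Finset.sum_add_distrib, Finset.sum_const, nsmul_eq_mul, ← Finset.mul_sum, hC0,
              show Finset.Icc 1 T = Finset.Ico 1 (T+1) from (Finset.Ico_add_one_right_eq_Icc 1 T).symm]
        _ ≤ 2 * ε' := by
            have hcard : ((Finset.Ico 1 (T+1)).card : ℝ) ≤ (T:ℝ) + 1 := by
              rw [Nat.card_Ico, Nat.add_sub_cancel]; push_cast; linarith
            have hq1 : ((Finset.Ico 1 (T+1)).card : ℝ) * (ε' / (T+1)) ≤ ε' := by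
              rw [div_eq_inv_mul]
              calc ((Finset.Ico 1 (T+1)).card : ℝ) * (((T:ℝ)+1)⁻¹ * ε')
                  ≤ ((T:ℝ)+1) * (((T:ℝ)+1)⁻¹ * ε') := by
                    apply mul_le_mul_of_nonneg_right hcard (by positivity)
                _ = ε' := by field_simp
            have hq2 : (T:ℝ)/b * C0 ≤ ε' := by
              rw [div_mul_eq_mul_div, div_le_iff₀ hbR]
              have hB1b : (B1:ℝ) ≤ (b:ℝ) := by exact_mod_cast hbB1
              have := hB1
              rw [div_le_iff₀ hε'] at this
              nlinarith
            linarith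
    have hpart2 : ∑ τ ∈ Finset.Ico (T+1) b, |(b:ℝ)⁻¹ * S τ - g τ| ≤ 2 * ε' := by
      have hper : ∀ τ ∈ Finset.Ico (T+1) b, |(b:ℝ)⁻¹ * S τ - g τ| ≤ 2 * c τ := by
        intro τ hτ
        rw [Finset.mem_Ico] at hτ
        have hSb : |S τ| ≤ ((b - τ : ℕ):ℝ) * c τ := by
          have := abs_sum_le_card_mul (fun i => hφb τ (s + i)) (Finset.range (b - τ))
          rwa [Finset.card_range] at this
        have hb1' : (b:ℝ)⁻¹ * |S τ| ≤ c τ := by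
          have hle : ((b - τ:ℕ):ℝ) ≤ (b:ℝ) := by exact_mod_cast Nat.sub_le b τ
          have : (b:ℝ)⁻¹ * |S τ| ≤ (b:ℝ)⁻¹ * ((b:ℝ) * c τ) := by
            apply mul_le_mul_of_nonneg_left _ (by positivity)
            exact le_trans hSb (mul_le_mul_of_nonneg_right hle (hc0 τ))
          calc (b:ℝ)⁻¹ * |S τ| ≤ (b:ℝ)⁻¹ * ((b:ℝ) * c τ) := this
            _ = c τ := by field_simp
        calc |(b:ℝ)⁻¹ * S τ - g τ| ≤ |(b:ℝ)⁻¹ * S τ| + |g τ| := abs_sub _ _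
          _ ≤ c τ + c τ := by
              rw [abs_mul, abs_inv, Nat.abs_cast]
              exact add_le_add hb1' (hgb τ)
          _ = 2 * c τ := by ring
      calc ∑ τ ∈ Finset.Ico (T+1) b, |(b:ℝ)⁻¹ * S τ - g τ|
          ≤ ∑ τ ∈ Finset.Ico (T+1) b, 2 * c τ := Finset.sum_le_sum hper
        _ = 2 * ∑ τ ∈ Finset.Ico (T+1) b, c τ := by rw [Finset.mul_sum]
        _ ≤ 2 * ε' := by
            have hre : ∑ τ ∈ Finset.Ico (T+1) b, c τ
                = ∑ i ∈ Finset.range (b - (T+1)), c (i + (T+1)) := by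
              rw [Finset.sum_Ico_eq_sum_range]
              exact Finset.sum_congr rfl (fun i _ => by rw [add_comm])
            have hle : ∑ i ∈ Finset.range (b - (T+1)), c (i + (T+1)) ≤ ∑' k, c (k + (T+1)) :=
              Summable.sum_le_tsum _ (fun i _ => hc0 _) ((summable_nat_add_iff (T+1)).2 hc)
            rw [hre]
            linarith
    linarith
  -- put everything together
  have habs : |(avg (φ 0) s b + 2 * (b:ℝ)⁻¹ * ∑ τ ∈ Finset.Icc 1 (b-1), S τ)
        - (g 0 + 2 * ∑' τ : ℕ, g (τ + 1))| ≤ 11 * ε' := by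
    rw [hdecomp]
    have h2 : |∑ τ ∈ Finset.Icc 1 (b-1), ((b:ℝ)⁻¹ * S τ - g τ)|
        ≤ 2 * ε' + 2 * ε' :=
      le_trans (Finset.abs_sum_le_sum_abs _ _) hmid
    calc |(avg (φ 0) s b - g 0) + 2 * (∑ τ ∈ Finset.Icc 1 (b-1), ((b:ℝ)⁻¹ * S τ - g τ))
          - 2 * ∑' k, g (k + b)|
        ≤ |avg (φ 0) s b - g 0| + 2 * |∑ τ ∈ Finset.Icc 1 (b-1), ((b:ℝ)⁻¹ * S τ - g τ)|
          + 2 * |∑' k, g (k + b)| := by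
          have ha := abs_add_le ((avg (φ 0) s b - g 0)
            + 2 * (∑ τ ∈ Finset.Icc 1 (b-1), ((b:ℝ)⁻¹ * S τ - g τ))) (-(2 * ∑' k, g (k + b)))
          have hb' := abs_add_le (avg (φ 0) s b - g 0)
            (2 * (∑ τ ∈ Finset.Icc 1 (b-1), ((b:ℝ)⁻¹ * S τ - g τ)))
          rw [abs_neg, abs_mul] at ha
          rw [abs_mul] at hb'
          simp only [abs_two] at ha hb'
          have : (avg (φ 0) s b - g 0) + 2 * (∑ τ ∈ Finset.Icc 1 (b-1), ((b:ℝ)⁻¹ * S τ - g τ))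
              - 2 * ∑' k, g (k + b)
              = ((avg (φ 0) s b - g 0) + 2 * (∑ τ ∈ Finset.Icc 1 (b-1), ((b:ℝ)⁻¹ * S τ - g τ)))
                + (-(2 * ∑' k, g (k + b))) := by ring
          rw [this]
          linarith
      _ ≤ ε' + 2 * (2 * ε' + 2 * ε') + 2 * ε' := by
          have := hterm1; have := hterm3
          nlinarith [h2, hterm1, hterm3]
      _ ≤ 11 * ε' := by linarith
  have h11 : 11 * ε' = ε := by rw [hε'def]; ring
  rw [← h11]
  exact habs

lemma cov_comm (P : Measure Ω) (f g : Ω → ℝ) : cov P f g = cov P g f := by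
  simp only [cov]
  rw [mul_comm (∫ ω, f ω ∂P)]
  congr 1
  simp_rw [mul_comm (f _)]

lemma cov_sum_sum (P : Measure Ω) [IsProbabilityMeasure P] (X : ℤ → Ω → ℝ)
    (hXm : ∀ t, Measurable (X t)) (hsq : ∀ t, Integrable (fun ω => (X t ω)^2) P)
    (s : ℤ) (b : ℕ) :
    cov P (fun ω => ∑ i ∈ Finset.range b, X (s + i) ω)
        (fun ω => ∑ j ∈ Finset.range b, X (s + j) ω)
      = ∑ i ∈ Finset.range b, ∑ j ∈ Finset.range b, cov P (X (s + i)) (X (s + j)) := by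
  have hmul : ∀ t u : ℤ, Integrable (fun ω => X t ω * X u ω) P := by
    intro t u
    refine Integrable.mono' (((hsq t).add (hsq u)).const_mul (1/2 : ℝ))
      ((hXm t).mul (hXm u)).aestronglyMeasurable ?_
    filter_upwards with ω
    rw [Real.norm_eq_abs, abs_mul]
    simp only [Pi.add_apply]
    nlinarith [sq_nonneg (|X t ω| - |X u ω|), sq_abs (X t ω), sq_abs (X u ω),
      abs_nonneg (X t ω), abs_nonneg (X u ω)]
  have hint1 : ∀ t : ℤ, Integrable (X t) P := by
    intro t
    refine Integrable.mono' (((hsq t).add (integrable_const 1)).const_mul (1/2 : ℝ))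
      (hXm t).aestronglyMeasurable ?_
    filter_upwards with ω
    rw [Real.norm_eq_abs]
    simp only [Pi.add_apply]
    nlinarith [sq_nonneg (|X t ω| - 1), sq_abs (X t ω), abs_nonneg (X t ω)]
  simp only [cov]
  have h1 : ∫ ω, (∑ i ∈ Finset.range b, X (s + i) ω) * (∑ j ∈ Finset.range b, X (s + j) ω) ∂P
      = ∑ i ∈ Finset.range b, ∑ j ∈ Finset.range b, ∫ ω, X (s + i) ω * X (s + j) ω ∂P := by
    have e : (fun ω => (∑ i ∈ Finset.range b, X (s + i) ω) * (∑ j ∈ Finset.range b, X (s + j) ω))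
        = fun ω => ∑ i ∈ Finset.range b, ∑ j ∈ Finset.range b, X (s + i) ω * X (s + j) ω := by
      funext ω; rw [Finset.sum_mul_sum]
    rw [e, integral_finset_sum _ (fun i _ => integrable_finset_sum _ (fun j _ => hmul _ _))]
    exact Finset.sum_congr rfl (fun i _ => integral_finset_sum _ (fun j _ => hmul _ _))
  have h2 : ∫ ω, (∑ i ∈ Finset.range b, X (s + i) ω) ∂P
      = ∑ i ∈ Finset.range b, ∫ ω, X (s + i) ω ∂P :=
    integral_finset_sum _ (fun i _ => hint1 _)
  rw [h1, h2, Finset.sum_mul_sum, ← Finset.sum_sub_distrib]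
  exact Finset.sum_congr rfl (fun i _ => by rw [← Finset.sum_sub_distrib])

lemma cov_smul_self (P : Measure Ω) (a : ℝ) (F : Ω → ℝ) :
    cov P (fun ω => a * F ω) (fun ω => a * F ω) = a^2 * cov P F F := by
  simp only [cov]
  have e : (fun ω => (a * F ω) * (a * F ω)) = (fun ω => a^2 * (F ω * F ω)) := by
    funext ω; ring
  rw [e, integral_const_mul, integral_const_mul]
  ring

lemma double_sum_reorg (F : ℕ → ℕ → ℝ) (hsym : ∀ i j, F i j = F j i) (b : ℕ) :
    ∑ i ∈ Finset.range b, ∑ j ∈ Finset.range b, F i j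
      = ∑ i ∈ Finset.range b, F i i
        + 2 * ∑ τ ∈ Finset.Icc 1 (b-1), ∑ i ∈ Finset.range (b - τ), F i (i + τ) := by
  classical
  set S := Finset.range b ×ˢ Finset.range b with hS
  have h0 : ∑ i ∈ Finset.range b, ∑ j ∈ Finset.range b, F i j
      = ∑ p ∈ S, F p.1 p.2 := by
    rw [Finset.sum_product]
  set A := S.filter (fun p => p.1 < p.2) with hA
  set D := S.filter (fun p => p.1 = p.2) with hD
  set C := S.filter (fun p => p.2 < p.1) with hC
  have hsplit1 : ∑ p ∈ S, F p.1 p.2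
      = ∑ p ∈ A, F p.1 p.2 + ∑ p ∈ S.filter (fun p => ¬ p.1 < p.2), F p.1 p.2 :=
    (Finset.sum_filter_add_sum_filter_not S _ _).symm
  have hsplit2 : ∑ p ∈ S.filter (fun p => ¬ p.1 < p.2), F p.1 p.2
      = ∑ p ∈ D, F p.1 p.2 + ∑ p ∈ C, F p.1 p.2 := by
    rw [← Finset.sum_filter_add_sum_filter_not (S.filter (fun p => ¬ p.1 < p.2))
      (fun p => p.1 = p.2)]
    congr 1
    · congr 1
      rw [Finset.filter_filter, hD]
      apply Finset.filter_congr
      intro p _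
      constructor
      · rintro ⟨_, h⟩; exact h
      · intro h; exact ⟨by omega, h⟩
    · congr 1
      rw [Finset.filter_filter, hC]
      apply Finset.filter_congr
      intro p _
      constructor
      · rintro ⟨h1, h2⟩; omega
      · intro h; constructor <;> omega
  have hdiag : ∑ p ∈ D, F p.1 p.2 = ∑ i ∈ Finset.range b, F i i := by
    apply Finset.sum_nbij' (fun p : ℕ × ℕ => p.1) (fun i => (i, i))
    · intro p hp
      simp only [hD, hS, Finset.mem_filter, Finset.mem_product, Finset.mem_range] at hp
      simp only [Finset.mem_range]
      exact hp.1.1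
    · intro i hi
      simp only [Finset.mem_range] at hi
      simp only [hD, hS, Finset.mem_filter, Finset.mem_product, Finset.mem_range]
      exact ⟨⟨hi, hi⟩, trivial⟩
    · intro p hp
      simp only [hD, hS, Finset.mem_filter] at hp
      have := hp.2
      ext <;> simp <;> omega
    · intro i _; rfl
    · intro p hp
      simp only [hD, Finset.mem_filter] at hp
      rw [← hp.2]
  have hCA : ∑ p ∈ C, F p.1 p.2 = ∑ p ∈ A, F p.1 p.2 := by
    apply Finset.sum_nbij' (fun p : ℕ × ℕ => Prod.swap p) (fun p : ℕ × ℕ => Prod.swap p)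
    · intro p hp
      simp only [hC, hA, hS, Finset.mem_filter, Finset.mem_product, Finset.mem_range] at hp ⊢
      exact ⟨⟨hp.1.2, hp.1.1⟩, hp.2⟩
    · intro p hp
      simp only [hC, hA, hS, Finset.mem_filter, Finset.mem_product, Finset.mem_range] at hp ⊢
      exact ⟨⟨hp.1.2, hp.1.1⟩, hp.2⟩
    · intro p _; simp
    · intro p _; simp
    · intro p _; exact hsym p.1 p.2
  have hupper : ∑ p ∈ A, F p.1 p.2
      = ∑ τ ∈ Finset.Icc 1 (b-1), ∑ i ∈ Finset.range (b - τ), F i (i + τ) := by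
    rw [Finset.sum_sigma']
    symm
    apply Finset.sum_nbij' (fun q : Σ _ : ℕ, ℕ => (q.2, q.2 + q.1))
      (fun p : ℕ × ℕ => ⟨p.2 - p.1, p.1⟩)
    · intro q hq
      simp only [Finset.mem_sigma, Finset.mem_Icc, Finset.mem_range] at hq
      simp only [hA, hS, Finset.mem_filter, Finset.mem_product, Finset.mem_range]
      omega
    · intro p hp
      simp only [hA, hS, Finset.mem_filter, Finset.mem_product, Finset.mem_range] at hp
      simp only [Finset.mem_sigma, Finset.mem_Icc, Finset.mem_range]
      omega
    · intro q hq
      simp only [Finset.mem_sigma, Finset.mem_Icc, Finset.mem_range] at hq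
      ext <;> simp <;> omega
    · intro p hp
      simp only [hA, hS, Finset.mem_filter, Finset.mem_product, Finset.mem_range] at hp
      ext <;> simp <;> omega
    · intro q _; rfl
  rw [h0, hsplit1, hsplit2, hdiag, hCA, hupper]
  ring

set_option maxHeartbeats 2000000 in
/-- **Lemma A.6**: for an APC time series with uniformly summable autocovariance function,
the variances of normalized block sums converge, uniformly over the block starting point,
to a common limit `σ²`. -/
theorem apc_block_variance_uniform_limit
    (P : Measure Ω) [IsProbabilityMeasure P]
    (X : ℤ → Ω → ℝ) (hXm : ∀ t, Measurable (X t))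
    (hAPC : APC P X)
    (c : ℕ → ℝ) (hc : Summable c)
    (hcov : ∀ (t : ℤ) (τ : ℕ), |cov P (X t) (X (t + τ))| ≤ c τ) :
    ∃ σ2 : ℝ, ∀ b : ℕ → ℕ, (∀ n, b n ≤ n) → Tendsto b atTop atTop →
      Tendsto
        (fun n => ⨆ s ∈ Finset.Icc 1 (n - b n + 1),
          |cov P
            (fun ω => (Real.sqrt (b n))⁻¹ * ∑ j ∈ Finset.range (b n), X ((s : ℤ) + j) ω)
            (fun ω => (Real.sqrt (b n))⁻¹ * ∑ j ∈ Finset.range (b n), X ((s : ℤ) + j) ω)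
            - σ2|)
        atTop (𝓝 0) := by
  obtain ⟨hsq, hm, hr⟩ := hAPC
  set φ : ℕ → ℤ → ℝ := fun τ t => cov P (X t) (X (t + (τ:ℤ))) with hφ
  have hφb : ∀ τ t, |φ τ t| ≤ c τ := fun τ t => hcov t τ
  have hc0 : ∀ τ, 0 ≤ c τ := fun τ => le_trans (abs_nonneg _) (hφb τ 0)
  have Hτ : ∀ τ : ℕ, ∃ L : ℝ, ∀ ε : ℝ, 0 < ε → ∃ N : ℕ, 0 < N ∧ ∀ n, N ≤ n → ∀ s,
      |avg (φ τ) s n - L| ≤ ε := by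
    intro τ
    have hprod : AlmostPeriodicSeq
        (fun t => (∫ ω, X t ω ∂P) * (∫ ω, X (t + (τ:ℤ)) ω ∂P)) := hm.mul_shift (τ:ℤ)
    have h := uniform_mean_sub (hr (τ:ℤ)) hprod
    have hfeq : (fun t : ℤ => (∫ ω, X t ω * X (t + (τ:ℤ)) ω ∂P)
        - (∫ ω, X t ω ∂P) * (∫ ω, X (t + (τ:ℤ)) ω ∂P)) = φ τ := rfl
    rwa [hfeq] at h
  choose g hg using Hτ
  have hgb : ∀ τ, |g τ| ≤ c τ := by
    intro τ
    have h : ∀ ε : ℝ, 0 < ε → |g τ| ≤ c τ + ε := by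
      intro ε hε
      obtain ⟨N, hN1, hN⟩ := hg τ ε hε
      have h1 := hN N le_rfl 0
      have h2 := avg_abs_le (hc0 τ) (fun t => hφb τ t) 0 N
      have key : |g τ| ≤ |avg (φ τ) 0 N| + |avg (φ τ) 0 N - g τ| := by
        calc |g τ| = |avg (φ τ) 0 N - (avg (φ τ) 0 N - g τ)| := by ring_nf
          _ ≤ _ := abs_sub _ _
      linarith
    by_contra hcon
    push_neg at hcon
    have := h ((|g τ| - c τ)/2) (by linarith)
    linarith
  have hfin := final_est φ g c hc hφb hgb (fun τ => hg τ)
  refine ⟨g 0 + 2 * ∑' τ : ℕ, g (τ + 1), ?_⟩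
  intro b hble hbtop
  rw [Metric.tendsto_atTop]
  intro ε hε
  obtain ⟨B, hB⟩ := hfin (ε/2) (by linarith)
  obtain ⟨N1, hN1⟩ := eventually_atTop.1 (hbtop.eventually_ge_atTop (max B 1))
  refine ⟨N1, fun n hn => ?_⟩
  set bn := b n with hbn
  have hbnB : B ≤ bn := le_trans (le_max_left _ _) (hN1 n hn)
  have hbn1 : 1 ≤ bn := le_trans (le_max_right _ _) (hN1 n hn)
  have hbnR : (0:ℝ) < bn := by exact_mod_cast hbn1
  have hpt : ∀ s : ℤ, |cov P
      (fun ω => (Real.sqrt bn)⁻¹ * ∑ j ∈ Finset.range bn, X (s + j) ω)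
      (fun ω => (Real.sqrt bn)⁻¹ * ∑ j ∈ Finset.range bn, X (s + j) ω)
      - (g 0 + 2 * ∑' τ : ℕ, g (τ + 1))| ≤ ε/2 := by
    intro s
    have e1 : cov P (fun ω => (Real.sqrt bn)⁻¹ * ∑ j ∈ Finset.range bn, X (s + j) ω)
        (fun ω => (Real.sqrt bn)⁻¹ * ∑ j ∈ Finset.range bn, X (s + j) ω)
        = ((Real.sqrt bn)⁻¹)^2 * cov P (fun ω => ∑ j ∈ Finset.range bn, X (s + j) ω)
            (fun ω => ∑ j ∈ Finset.range bn, X (s + j) ω) :=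
      cov_smul_self P _ _
    have hsq2 : ((Real.sqrt (bn:ℕ))⁻¹ : ℝ)^2 = ((bn:ℕ):ℝ)⁻¹ := by
      rw [inv_pow, Real.sq_sqrt (by positivity : (0:ℝ) ≤ ((bn:ℕ):ℝ))]
    have e2 := cov_sum_sum P X hXm hsq s bn
    have e3 := double_sum_reorg (fun i j => cov P (X (s + i)) (X (s + j)))
      (fun i j => cov_comm P _ _) bn
    have ediag : ∑ i ∈ Finset.range bn, cov P (X (s + (i:ℤ))) (X (s + (i:ℤ)))
        = ∑ i ∈ Finset.range bn, φ 0 (s + (i:ℤ)) := by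
      refine Finset.sum_congr rfl (fun i _ => ?_)
      simp [hφ]
    have eoffsum : ∑ τ ∈ Finset.Icc 1 (bn - 1), ∑ i ∈ Finset.range (bn - τ),
          cov P (X (s + (i:ℤ))) (X (s + ((i + τ : ℕ):ℤ)))
        = ∑ τ ∈ Finset.Icc 1 (bn - 1), ∑ i ∈ Finset.range (bn - τ), φ τ (s + (i:ℤ)) := by
      refine Finset.sum_congr rfl (fun τ _ => Finset.sum_congr rfl (fun i _ => ?_))
      simp only [hφ]
      congr 2
      push_cast
      ring
    have emain : cov P (fun ω => (Real.sqrt bn)⁻¹ * ∑ j ∈ Finset.range bn, X (s + j) ω)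
        (fun ω => (Real.sqrt bn)⁻¹ * ∑ j ∈ Finset.range bn, X (s + j) ω)
        = avg (φ 0) s bn + 2 * ((bn:ℕ):ℝ)⁻¹ * ∑ τ ∈ Finset.Icc 1 (bn - 1),
            ∑ i ∈ Finset.range (bn - τ), φ τ (s + (i:ℤ)) := by
      rw [e1, hsq2, e2, e3, ediag, eoffsum, avg]
      ring
    rw [emain]
    exact hB bn hbnB s
  have hub : ∀ s : ℕ, (⨆ _h : s ∈ Finset.Icc 1 (n - bn + 1), |cov P
      (fun ω => (Real.sqrt bn)⁻¹ * ∑ j ∈ Finset.range bn, X ((s:ℤ) + j) ω)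
      (fun ω => (Real.sqrt bn)⁻¹ * ∑ j ∈ Finset.range bn, X ((s:ℤ) + j) ω)
      - (g 0 + 2 * ∑' τ : ℕ, g (τ + 1))|) ≤ ε/2 :=
    fun s => Real.iSup_le (fun _ => hpt s) (by linarith)
  have hsup_le : (⨆ s ∈ Finset.Icc 1 (n - bn + 1), |cov P
      (fun ω => (Real.sqrt bn)⁻¹ * ∑ j ∈ Finset.range bn, X ((s:ℤ) + j) ω)
      (fun ω => (Real.sqrt bn)⁻¹ * ∑ j ∈ Finset.range bn, X ((s:ℤ) + j) ω)
      - (g 0 + 2 * ∑' τ : ℕ, g (τ + 1))|) ≤ ε/2 :=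
    Real.iSup_le hub (by linarith)
  have hsup_nonneg : 0 ≤ ⨆ s ∈ Finset.Icc 1 (n - bn + 1), |cov P
      (fun ω => (Real.sqrt bn)⁻¹ * ∑ j ∈ Finset.range bn, X ((s:ℤ) + j) ω)
      (fun ω => (Real.sqrt bn)⁻¹ * ∑ j ∈ Finset.range bn, X ((s:ℤ) + j) ω)
      - (g 0 + 2 * ∑' τ : ℕ, g (τ + 1))| := by
    have hbdd : BddAbove (Set.range (fun s : ℕ => ⨆ _h : s ∈ Finset.Icc 1 (n - bn + 1), |cov P
        (fun ω => (Real.sqrt bn)⁻¹ * ∑ j ∈ Finset.range bn, X ((s:ℤ) + j) ω)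
        (fun ω => (Real.sqrt bn)⁻¹ * ∑ j ∈ Finset.range bn, X ((s:ℤ) + j) ω)
        - (g 0 + 2 * ∑' τ : ℕ, g (τ + 1))|)) := by
      refine ⟨ε/2, ?_⟩
      rintro x ⟨s, rfl⟩
      exact hub s
    have h0 : (⨆ _h : (0:ℕ) ∈ Finset.Icc 1 (n - bn + 1), |cov P
        (fun ω => (Real.sqrt bn)⁻¹ * ∑ j ∈ Finset.range bn, X (((0:ℕ):ℤ) + j) ω)
        (fun ω => (Real.sqrt bn)⁻¹ * ∑ j ∈ Finset.range bn, X (((0:ℕ):ℤ) + j) ω)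
        - (g 0 + 2 * ∑' τ : ℕ, g (τ + 1))|) = 0 := by
      have hnot : (0:ℕ) ∉ Finset.Icc 1 (n - bn + 1) := by simp
      haveI : IsEmpty ((0:ℕ) ∈ Finset.Icc 1 (n - bn + 1)) := ⟨fun h => hnot h⟩
      exact Real.iSup_of_isEmpty _
    have := le_ciSup hbdd (0:ℕ)
    rw [h0] at this
    exact this
  rw [Real.dist_eq, sub_zero, abs_of_nonneg hsup_nonneg]
  exact lt_of_le_of_lt hsup_le (by linarith)
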